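/- Let S = ℕ[x]({u_1,…,u_m}) ⊆ ℤ[x]^n be the affine ℕ[x]-semimodule generated by a finite set {u_1,…,u_m}, and let F be a face of S. Then F is generated as an ℕ[x]-semimodule by those generators of S which lie in F: F = ℕ[x]({u_i : u_i ∈ F}). Consequently every face of S is an affine ℕ[x]-semimodule and S has only finitely many faces. -/

import Mathlib

open Polynomial

/-- `S ⊆ ℤ[x]^n` is an `ℕ[x]`-semimodule. -/
def IsNxSemimodule {n : ℕ} (S : Set (Fin n → Polynomial ℤ)) : Prop :=
  0 ∈ S ∧ (∀ u ∈ S, ∀ v ∈ S, u + v ∈ S) ∧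
    ∀ g : Polynomial ℕ, ∀ u ∈ S, (g.map (Nat.castRingHom ℤ)) • u ∈ S

/-- `F` is a face of the `ℕ[x]`-semimodule `S`. -/
def IsFace {n : ℕ} (S F : Set (Fin n → Polynomial ℤ)) : Prop :=
  F ⊆ S ∧ IsNxSemimodule F ∧
    (∀ u ∈ S, ∀ v ∈ S, u + v ∈ F → u ∈ F ∧ v ∈ F) ∧
    (∀ u ∈ S, (Polynomial.X : Polynomial ℤ) • u ∈ F → u ∈ F)

lemma aux_sum_mem {n : ℕ} {S : Set (Fin n → Polynomial ℤ)} (hS : IsNxSemimodule S)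
    {ι : Type*} (t : Finset ι) (f : ι → (Fin n → Polynomial ℤ))
    (h : ∀ i ∈ t, f i ∈ S) : ∑ i ∈ t, f i ∈ S := by
  classical
  induction t using Finset.induction_on with
  | empty => simpa using hS.1
  | insert _ _ hx ih =>
    rw [Finset.sum_insert hx]
    exact hS.2.1 _ (h _ (Finset.mem_insert_self _ _)) _
      (ih fun i hi => h i (Finset.mem_insert_of_mem hi))

lemma aux_S_semimodule {m n : ℕ} (u : Fin m → Fin n → Polynomial ℤ) :
    IsNxSemimodule {x | ∃ g : Fin m → Polynomial ℕ,
      x = ∑ i, ((g i).map (Nat.castRingHom ℤ)) • u i} := by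
  refine ⟨⟨0, by simp⟩, ?_, ?_⟩
  · rintro a ⟨g, rfl⟩ b ⟨h, rfl⟩
    exact ⟨g + h, by simp [Polynomial.map_add, add_smul, Finset.sum_add_distrib]⟩
  · rintro p a ⟨g, rfl⟩
    refine ⟨fun i => p * g i, ?_⟩
    rw [Finset.smul_sum]
    refine Finset.sum_congr rfl fun i _ => ?_
    rw [Polynomial.map_mul, mul_smul]

lemma aux_gen_mem {m n : ℕ} (u : Fin m → Fin n → Polynomial ℤ) (i : Fin m) :
    u i ∈ {x | ∃ g : Fin m → Polynomial ℕ,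
      x = ∑ i, ((g i).map (Nat.castRingHom ℤ)) • u i} := by
  classical
  refine ⟨fun j => if j = i then 1 else 0, ?_⟩
  rw [show ∑ j, (((if j = i then 1 else 0 : Polynomial ℕ)).map (Nat.castRingHom ℤ)) • u j
      = ∑ j, if j = i then u j else 0 from ?_]
  · simp
  · refine Finset.sum_congr rfl fun j _ => ?_
    split <;> simp

lemma aux_face_of_sum {n : ℕ} {S F : Set (Fin n → Polynomial ℤ)}
    (hSmod : IsNxSemimodule S) (hF : IsFace S F)
    {ι : Type*} (t : Finset ι) (f : ι → (Fin n → Polynomial ℤ))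
    (hmem : ∀ i ∈ t, f i ∈ S) (hsum : ∑ i ∈ t, f i ∈ F) : ∀ i ∈ t, f i ∈ F := by
  classical
  induction t using Finset.induction_on with
  | empty => simp
  | @insert a t hx ih =>
    rw [Finset.sum_insert hx] at hsum
    have h1 := hF.2.2.1 _ (hmem _ (Finset.mem_insert_self _ _))
      _ (aux_sum_mem hSmod t f fun i hi => hmem i (Finset.mem_insert_of_mem hi)) hsum
    intro i hi
    rcases Finset.mem_insert.1 hi with rfl | hi
    · exact h1.1
    · exact ih (fun j hj => hmem j (Finset.mem_insert_of_mem hj)) h1.2 i hi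

lemma aux_Xpow_smul_mem_face {n : ℕ} {S F : Set (Fin n → Polynomial ℤ)}
    (hSmod : IsNxSemimodule S) (hF : IsFace S F)
    {v : Fin n → Polynomial ℤ} (hv : v ∈ S) :
    ∀ k : ℕ, (X : Polynomial ℤ) ^ k • v ∈ F → v ∈ F := by
  intro k
  induction k with
  | zero => simp
  | succ k ih =>
    intro h
    have hXk : (X : Polynomial ℤ) ^ k • v ∈ S := by
      have := hSmod.2.2 (X ^ k) v hv
      simpa [Polynomial.map_pow] using this
    have : (X : Polynomial ℤ) • ((X : Polynomial ℤ) ^ k • v) ∈ F := by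
      rwa [smul_smul, ← pow_succ']
    exact ih (hF.2.2.2 _ hXk this)

lemma aux_smul_mem_face {n : ℕ} {S F : Set (Fin n → Polynomial ℤ)}
    (hSmod : IsNxSemimodule S) (hF : IsFace S F)
    {v : Fin n → Polynomial ℤ} (hv : v ∈ S)
    {g : Polynomial ℕ} (hg : g ≠ 0)
    (h : (g.map (Nat.castRingHom ℤ)) • v ∈ F) : v ∈ F := by
  classical
  -- decompose g into monomials
  have hdecomp : (g.map (Nat.castRingHom ℤ)) • v
      = ∑ k ∈ g.support, ((monomial k (g.coeff k)).map (Nat.castRingHom ℤ)) • v := by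
    rw [← Finset.sum_smul, ← Polynomial.map_sum, ← Polynomial.as_sum_support]
  rw [hdecomp] at h
  obtain ⟨k, hk⟩ := Finset.nonempty_of_ne_empty (by simpa using hg : g.support ≠ ∅)
  have hterm : ((monomial k (g.coeff k)).map (Nat.castRingHom ℤ)) • v ∈ F := by
    refine aux_face_of_sum hSmod hF _ _ (fun j _ => hSmod.2.2 _ _ hv) h k hk
  -- g.coeff k ≠ 0, write it as b + 1
  have hck : g.coeff k ≠ 0 := Polynomial.mem_support_iff.1 hk
  obtain ⟨b, hb⟩ := Nat.exists_eq_succ_of_ne_zero hck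
  have hsplit : ((monomial k (g.coeff k)).map (Nat.castRingHom ℤ)) • v
      = (X : Polynomial ℤ) ^ k • v + ((monomial k b).map (Nat.castRingHom ℤ)) • v := by
    rw [hb]
    rw [show (monomial k (b + 1) : Polynomial ℕ) = monomial k 1 + monomial k b by
      rw [← map_add]; ring_nf]
    rw [Polynomial.map_add, add_smul, Polynomial.map_monomial]
    simp [Polynomial.X_pow_eq_monomial]
  rw [hsplit] at hterm
  have h1 : (X : Polynomial ℤ) ^ k • v ∈ S := by
    have := hSmod.2.2 (X ^ k) v hv
    simpa [Polynomial.map_pow] using this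
  have h2 : ((monomial k b).map (Nat.castRingHom ℤ)) • v ∈ S := hSmod.2.2 _ _ hv
  exact aux_Xpow_smul_mem_face hSmod hF hv k (hF.2.2.1 _ h1 _ h2 hterm).1

lemma aux_face_eq {m n : ℕ} (u : Fin m → Fin n → Polynomial ℤ)
    (S : Set (Fin n → Polynomial ℤ))
    (hS : S = {x | ∃ g : Fin m → Polynomial ℕ,
      x = ∑ i, ((g i).map (Nat.castRingHom ℤ)) • u i})
    (F : Set (Fin n → Polynomial ℤ)) (hF : IsFace S F) :
    F = {x | ∃ g : Fin m → Polynomial ℕ, (∀ i, g i ≠ 0 → u i ∈ F) ∧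
        x = ∑ i, ((g i).map (Nat.castRingHom ℤ)) • u i} := by
  classical
  have hSmod : IsNxSemimodule S := hS ▸ aux_S_semimodule u
  ext v
  constructor
  · intro hvF
    have hvS : v ∈ S := hF.1 hvF
    obtain ⟨g, hg⟩ := hS ▸ hvS
    refine ⟨g, fun i hi => ?_, hg⟩
    have hterm : ((g i).map (Nat.castRingHom ℤ)) • u i ∈ F := by
      refine aux_face_of_sum hSmod hF Finset.univ _
        (fun j _ => hSmod.2.2 _ _ (hS ▸ aux_gen_mem u j)) ?_ i (Finset.mem_univ i)
      rwa [← hg]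
    exact aux_smul_mem_face hSmod hF (hS ▸ aux_gen_mem u i) hi hterm
  · rintro ⟨g, hgF, rfl⟩
    refine aux_sum_mem hF.2.1 _ _ fun i _ => ?_
    by_cases h : g i = 0
    · simpa [h] using hF.2.1.1
    · exact hF.2.1.2.2 _ _ (hgF i h)

/-- Every face `F` of the affine `ℕ[x]`-semimodule `S = ℕ[x]({u_1,…,u_m})` is generated by
those generators of `S` lying in `F`; consequently every face is an affine
`ℕ[x]`-semimodule and `S` has only finitely many faces. -/
theorem face_generated_by_generators_and_finitely_many_faces
    {m n : ℕ} (u : Fin m → Fin n → Polynomial ℤ)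
    (S : Set (Fin n → Polynomial ℤ))
    (hS : S = {x | ∃ g : Fin m → Polynomial ℕ,
      x = ∑ i, ((g i).map (Nat.castRingHom ℤ)) • u i})
    (F : Set (Fin n → Polynomial ℤ)) (hF : IsFace S F) :
    (F = {x | ∃ g : Fin m → Polynomial ℕ, (∀ i, g i ≠ 0 → u i ∈ F) ∧
        x = ∑ i, ((g i).map (Nat.castRingHom ℤ)) • u i}) ∧
      {F' : Set (Fin n → Polynomial ℤ) | IsFace S F'}.Finite := by
  refine ⟨aux_face_eq u S hS F hF, ?_⟩
  set gen : Set (Fin m) → Set (Fin n → Polynomial ℤ) := fun A =>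
    {x | ∃ g : Fin m → Polynomial ℕ, (∀ i, g i ≠ 0 → i ∈ A) ∧
        x = ∑ i, ((g i).map (Nat.castRingHom ℤ)) • u i} with hgen
  refine Set.Finite.subset (Set.finite_range gen) ?_
  intro F' hF'
  exact ⟨{i | u i ∈ F'}, (aux_face_eq u S hS F' hF').symm⟩
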